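/- If f : X → Y is a continuous, discrete map from a connected, locally connected topological space X to a metric space Y (discrete meaning every fiber f⁻¹(y) is a discrete subset of X), then the pullback pseudometric f*d_Y(x₁,x₂) = inf { diam(f(α)) : α continuum containing x₁,x₂ } is a genuine metric, i.e. f*d_Y(x₁,x₂) = 0 implies x₁ = x₂. -/

import Mathlib

/-- The pullback pseudometric. -/
noncomputable def pullbackPD {X Y : Type*} [TopologicalSpace X] [PseudoMetricSpace Y]
    (f : X → Y) (x₁ x₂ : X) : ENNReal :=
  ⨅ (α : Set X) (_ : IsCompact α ∧ IsConnected α ∧ x₁ ∈ α ∧ x₂ ∈ α),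
    EMetric.diam (f '' α)

/-- A preconnected set meeting the interior of `K` and the complement of its closure
meets the frontier of `K`. -/
lemma cross_frontier {X : Type*} [TopologicalSpace X] {s K : Set X}
    (hs : IsPreconnected s) (h1 : (s ∩ interior K).Nonempty)
    (h2 : (s \ closure K).Nonempty) : (s ∩ frontier K).Nonempty := by
  by_contra h
  rw [Set.not_nonempty_iff_eq_empty] at h
  have hsub : s ⊆ interior K ∪ (closure K)ᶜ := by
    intro z hz
    by_cases hz1 : z ∈ interior K
    · exact Or.inl hz1
    · refine Or.inr fun hz2 => ?_
      have : z ∈ s ∩ frontier K := ⟨hz, hz2, hz1⟩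
      simp [h] at this
  obtain ⟨z, _, hz1, hz2⟩ := hs (interior K) (closure K)ᶜ isOpen_interior
    isClosed_closure.isOpen_compl hsub h1 h2
  exact hz2 (interior_subset_closure hz1)

/-- For a continuous map with discrete fibers, the pullback pseudometric is a genuine
metric: it separates points. -/
theorem stmt_1 {X Y : Type*} [TopologicalSpace X] [ConnectedSpace X]
    [LocallyConnectedSpace X] [LocallyCompactSpace X] [T2Space X]
    [MetricSpace Y] (f : X → Y) (hf : Continuous f)
    (hdisc : ∀ y : Y, DiscreteTopology (f ⁻¹' {y} : Set X)) :
    ∀ x₁ x₂ : X, pullbackPD f x₁ x₂ = 0 → x₁ = x₂ := by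
  intro x₁ x₂ h0
  -- Step A: f x₂ = f x₁
  have hedist : edist (f x₁) (f x₂) = 0 := by
    refine le_antisymm ?_ (zero_le)
    rw [← h0]
    exact le_iInf₂ fun α hα => EMetric.edist_le_diam_of_mem
      ⟨x₁, hα.2.2.1, rfl⟩ ⟨x₂, hα.2.2.2, rfl⟩
  have hfx : f x₂ = f x₁ := (edist_eq_zero.mp hedist).symm
  set F : Set X := f ⁻¹' {f x₁} with hF
  have hx₂F : x₂ ∈ F := by simp [hF, hfx]
  have hx₁F : x₁ ∈ F := rfl
  -- Step B: a neighborhood isolating x₁ in its fiber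
  have : IsOpen ({(⟨x₁, hx₁F⟩ : F)} : Set F) := by
    have := hdisc (f x₁); exact isOpen_discrete _
  rw [isOpen_induced_iff] at this
  obtain ⟨U, hUopen, hUeq⟩ := this
  have hx₁U : x₁ ∈ U := by
    have : (⟨x₁, hx₁F⟩ : F) ∈ (Subtype.val ⁻¹' U : Set F) := by
      rw [hUeq]; exact rfl
    exact this
  have hUF : ∀ z ∈ U ∩ F, z = x₁ := by
    rintro z ⟨hzU, hzF⟩
    have : (⟨z, hzF⟩ : F) ∈ (Subtype.val ⁻¹' U : Set F) := hzU
    rw [hUeq] at this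
    exact congrArg Subtype.val this
  -- Step C: compact neighborhood inside U
  obtain ⟨K, hKcomp, hx₁K, hKU⟩ := exists_compact_subset hUopen hx₁U
  have hKclosed : IsClosed K := hKcomp.isClosed
  -- It suffices to show x₂ ∈ K
  suffices hx₂K : x₂ ∈ K by
    exact (hUF x₂ ⟨hKU hx₂K, hx₂F⟩).symm
  by_cases hfr : frontier K = ∅
  · -- K is clopen, hence all of X
    have : K = Set.univ := by
      rcases (isClopen_iff.mp (isClopen_iff_frontier_eq_empty.mpr hfr)) with h | h
      · exact absurd (h ▸ interior_subset hx₁K) (Set.notMem_empty x₁)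
      · exact h
    simp [this]
  · -- frontier nonempty: get the positive distance ε
    have hfrK : frontier K ⊆ K := hKclosed.frontier_subset
    have hScomp : IsCompact (f '' frontier K) :=
      ((hKcomp.of_isClosed_subset isClosed_frontier hfrK).image hf)
    have hx₁notS : f x₁ ∉ f '' frontier K := by
      rintro ⟨z, hz, hzf⟩
      have hzx : z = x₁ := hUF z ⟨hKU (hfrK hz), by simp [hF, hzf]⟩
      rw [hzx] at hz
      exact hz.2 hx₁K
    set ε := EMetric.infEdist (f x₁) (f '' frontier K) with hε
    have hεpos : 0 < ε := by
      rw [hε, EMetric.infEdist, Metric.infEDist_pos_iff_notMem_closure]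
      rwa [hScomp.isClosed.closure_eq]
    -- get a continuum with small image diameter
    have hlt : pullbackPD f x₁ x₂ < ε := h0 ▸ hεpos
    rw [pullbackPD, iInf_lt_iff] at hlt
    obtain ⟨α, hαlt⟩ := hlt
    rw [iInf_lt_iff] at hαlt
    obtain ⟨⟨hαcomp, hαconn, hx₁α, hx₂α⟩, hαdiam⟩ := hαlt
    -- x₂ must be in K
    by_contra hx₂K
    obtain ⟨z, hzα, hzfr⟩ := cross_frontier hαconn.isPreconnected
      ⟨x₁, hx₁α, hx₁K⟩ ⟨x₂, hx₂α, by rwa [hKclosed.closure_eq]⟩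
    have h1 : ε ≤ edist (f x₁) (f z) := EMetric.infEdist_le_edist_of_mem ⟨z, hzfr, rfl⟩
    have h2 : edist (f x₁) (f z) ≤ EMetric.diam (f '' α) :=
      EMetric.edist_le_diam_of_mem ⟨x₁, hx₁α, rfl⟩ ⟨z, hzα, rfl⟩
    exact absurd hαdiam (not_lt.mpr (h1.trans h2))
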